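/- For n ∈ ℤ₊, sup over nonzero polynomials P of degree at most n of ‖P‖_{L_∞([-1,1])} / (∫_{-1}^1 |P(u)|² (1-u²)^{-1/2} du)^{1/2} = ((2n+1)/π)^{1/2}. -/

import Mathlib

open MeasureTheory Real Set

lemma int_cos_int (m : ℤ) (hm : m ≠ 0) :
    ∫ θ in (0:ℝ)..Real.pi, Real.cos (m * θ) = 0 := by
  have hc : ((m:ℝ)) ≠ 0 := Int.cast_ne_zero.mpr hm
  rw [intervalIntegral.integral_comp_mul_left (fun x => Real.cos x) hc]
  simp [Real.sin_int_mul_pi]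

lemma orth (j k : ℕ) :
    ∫ θ in (0:ℝ)..Real.pi, Real.cos (j*θ) * Real.cos (k*θ)
      = if j = k then (if j = 0 then Real.pi else Real.pi/2) else 0 := by
  have key : ∀ θ : ℝ, Real.cos (j*θ) * Real.cos (k*θ)
      = (Real.cos (((((j:ℤ)+k) : ℤ) : ℝ) * θ) + Real.cos (((((j:ℤ)-k) : ℤ) : ℝ) * θ)) / 2 := by
    intro θ
    push_cast
    rw [add_mul, sub_mul, Real.cos_add, Real.cos_sub]
    ring
  rw [intervalIntegral.integral_congr (g := fun θ =>
      (Real.cos (((((j:ℤ)+k) : ℤ) : ℝ) * θ) + Real.cos (((((j:ℤ)-k) : ℤ) : ℝ) * θ)) / 2) (fun θ _ => key θ)]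
  have i1 : ∀ m : ℤ, IntervalIntegrable (fun θ => Real.cos (m*θ)) volume 0 Real.pi :=
    fun m => (Real.continuous_cos.comp (continuous_const.mul continuous_id)).intervalIntegrable _ _
  simp only [div_eq_mul_inv]
  rw [intervalIntegral.integral_mul_const, intervalIntegral.integral_add (i1 _) (i1 _)]
  by_cases hjk : j = k
  · subst hjk
    by_cases hj : j = 0
    · subst hj; simp; ring
    · have h1 : ((j:ℤ) + j) ≠ 0 := by positivity
      rw [int_cos_int _ h1]
      have : ((j:ℤ) - j) = 0 := by ring
      rw [this]
      simp [hj]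
  · have h1 : ((j:ℤ) + k) ≠ 0 := by
      intro h
      have : j = 0 ∧ k = 0 := by omega
      exact hjk (by omega)
    have h2 : ((j:ℤ) - k) ≠ 0 := by
      intro h; exact hjk (by omega)
    rw [int_cos_int _ h1, int_cos_int _ h2]
    simp [hjk]

noncomputable def cheb (k : ℕ) : ℝ → ℂ := fun θ => ((Real.cos (k * θ) : ℝ) : ℂ)

lemma cosPow_mem (m : ℕ) :
    (fun θ : ℝ => ((Real.cos θ : ℂ))^m)
      ∈ Submodule.span ℂ (Set.range (fun k : Fin (m+1) => cheb k)) := by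
  induction m with
  | zero =>
    have : (fun θ : ℝ => ((Real.cos θ : ℂ))^0) = cheb 0 := by
      funext θ; simp [cheb]
    rw [this]
    exact Submodule.subset_span ⟨0, rfl⟩
  | succ m ih =>
    have hmul : ∀ f ∈ Submodule.span ℂ (Set.range (fun k : Fin (m+1) => cheb k)),
        (fun θ : ℝ => ((Real.cos θ : ℂ)) * f θ)
          ∈ Submodule.span ℂ (Set.range (fun k : Fin (m+2) => cheb k)) := by
      intro f hf
      induction hf using Submodule.span_induction with
      | mem f hf =>
        obtain ⟨k, rfl⟩ := hf
        by_cases hk : (k : ℕ) = 0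
        · have : (fun θ : ℝ => ((Real.cos θ : ℂ)) * cheb k θ) = cheb 1 := by
            funext θ; simp [cheb, hk]
          rw [this]
          exact Submodule.subset_span ⟨⟨1, by omega⟩, rfl⟩
        · have key : (fun θ : ℝ => ((Real.cos θ : ℂ)) * cheb k θ)
              = (1/2 : ℂ) • cheb ((k:ℕ)+1) + (1/2 : ℂ) • cheb ((k:ℕ)-1) := by
            funext θ
            have h1 : Real.cos (((k:ℕ)+1) * θ) + Real.cos ((((k:ℕ)-1) : ℕ) * θ)
                = 2 * Real.cos θ * Real.cos ((k:ℕ) * θ) := by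
              have hc : (((k:ℕ) - 1 : ℕ) : ℝ) = ((k:ℕ) : ℝ) - 1 := by
                have : 1 ≤ (k:ℕ) := Nat.one_le_iff_ne_zero.mpr hk
                push_cast [this]; ring
              rw [hc]
              push_cast
              rw [add_mul, sub_mul, one_mul, Real.cos_add, Real.cos_sub]
              ring
            simp only [Pi.add_apply, Pi.smul_apply, cheb, smul_eq_mul]
            have := congrArg (fun x : ℝ => ((x : ℂ))) h1
            push_cast at this ⊢
            linear_combination - this / 2
          rw [key]
          refine Submodule.add_mem _ (Submodule.smul_mem _ _ ?_) (Submodule.smul_mem _ _ ?_)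
          · exact Submodule.subset_span ⟨⟨(k:ℕ)+1, by omega⟩, rfl⟩
          · exact Submodule.subset_span ⟨⟨(k:ℕ)-1, by omega⟩, rfl⟩
      | zero =>
        have : (fun θ : ℝ => ((Real.cos θ : ℂ)) * (0:ℝ→ℂ) θ) = 0 := by funext θ; simp
        rw [this]; exact Submodule.zero_mem _
      | add f g _ _ hf hg =>
        have : (fun θ : ℝ => ((Real.cos θ : ℂ)) * (f+g) θ)
            = (fun θ : ℝ => ((Real.cos θ : ℂ)) * f θ) + (fun θ : ℝ => ((Real.cos θ : ℂ)) * g θ) := by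
          funext θ; simp [mul_add]
        rw [this]; exact Submodule.add_mem _ hf hg
      | smul a f _ hf =>
        have : (fun θ : ℝ => ((Real.cos θ : ℂ)) * (a • f) θ)
            = a • (fun θ : ℝ => ((Real.cos θ : ℂ)) * f θ) := by
          funext θ; simp [Pi.smul_apply, smul_eq_mul]; ring
        rw [this]; exact Submodule.smul_mem _ _ hf
    have : (fun θ : ℝ => ((Real.cos θ : ℂ))^(m+1))
        = (fun θ : ℝ => ((Real.cos θ : ℂ)) * ((Real.cos θ : ℂ))^m) := by
      funext θ; ring
    rw [this]
    exact hmul _ ih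

lemma cosPow_mem' (n m : ℕ) (hm : m ≤ n) :
    (fun θ : ℝ => ((Real.cos θ : ℂ))^m)
      ∈ Submodule.span ℂ (Set.range (fun k : Fin (n+1) => cheb k)) := by
  refine Submodule.span_mono ?_ (cosPow_mem m)
  rintro _ ⟨k, rfl⟩
  exact ⟨⟨(k:ℕ), by omega⟩, rfl⟩

lemma exists_expansion (n : ℕ) (P : Polynomial ℂ) (hP : P.natDegree ≤ n) :
    ∃ c : Fin (n+1) → ℂ, ∀ θ : ℝ,
      P.eval ((Real.cos θ : ℝ) : ℂ) = ∑ k : Fin (n+1), c k * Real.cos ((k:ℕ) * θ) := by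
  have hmem : (fun θ : ℝ => P.eval ((Real.cos θ : ℝ) : ℂ))
      ∈ Submodule.span ℂ (Set.range (fun k : Fin (n+1) => cheb k)) := by
    have he : (fun θ : ℝ => P.eval ((Real.cos θ : ℝ) : ℂ))
        = ∑ m ∈ Finset.range (n+1), P.coeff m • (fun θ : ℝ => ((Real.cos θ : ℂ))^m) := by
      funext θ
      rw [Polynomial.eval_eq_sum_range' (Nat.lt_succ_of_le hP)]
      simp [Finset.sum_apply]
    rw [he]
    exact Submodule.sum_mem _ fun m hm =>
      Submodule.smul_mem _ _ (cosPow_mem' n m (Nat.lt_succ_iff.mp (Finset.mem_range.mp hm)))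
  rw [Submodule.mem_span_range_iff_exists_fun ℂ] at hmem
  obtain ⟨c, hc⟩ := hmem
  refine ⟨c, fun θ => ?_⟩
  have := congrFun hc θ
  simp only [Finset.sum_apply, Pi.smul_apply, cheb, smul_eq_mul] at this
  exact this.symm

set_option maxHeartbeats 1000000 in
lemma J_eq (n : ℕ) (c : Fin (n+1) → ℂ) :
    ∫ θ in (0:ℝ)..Real.pi,
        ‖∑ k : Fin (n+1), c k * Real.cos ((k:ℕ)*θ)‖ ^ 2
      = ∑ k : Fin (n+1), ‖c k‖^2 * (if (k:ℕ) = 0 then Real.pi else Real.pi/2) := by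
  have hpt : ∀ θ : ℝ, ‖∑ k : Fin (n+1), c k * Real.cos ((k:ℕ)*θ)‖ ^ 2
      = ∑ j : Fin (n+1), ∑ k : Fin (n+1),
          (c j * (starRingEnd ℂ) (c k)).re * (Real.cos ((j:ℕ)*θ) * Real.cos ((k:ℕ)*θ)) := by
    intro θ
    set z := ∑ k : Fin (n+1), c k * ((Real.cos ((k:ℕ)*θ) : ℝ) : ℂ) with hz
    have h1 : ‖z‖^2 = (z * (starRingEnd ℂ) z).re := by
      rw [Complex.mul_conj]
      simp [Complex.sq_norm]
    rw [h1, hz, map_sum, Finset.sum_mul_sum]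
    rw [Complex.re_sum]
    refine Finset.sum_congr rfl fun j _ => ?_
    rw [Complex.re_sum]
    refine Finset.sum_congr rfl fun k _ => ?_
    simp only [map_mul, Complex.conj_ofReal]
    have : c j * ↑(Real.cos ((j:ℕ)*θ)) * ((starRingEnd ℂ) (c k) * ↑(Real.cos ((k:ℕ)*θ)))
        = (c j * (starRingEnd ℂ) (c k)) * ((Real.cos ((j:ℕ)*θ) * Real.cos ((k:ℕ)*θ) : ℝ) : ℂ) := by
      push_cast; ring
    rw [this, Complex.mul_re]
    simp only [Complex.ofReal_re, Complex.ofReal_im, mul_zero, sub_zero]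
  rw [intervalIntegral.integral_congr (g := fun θ => ∑ j : Fin (n+1), ∑ k : Fin (n+1),
      (c j * (starRingEnd ℂ) (c k)).re * (Real.cos ((j:ℕ)*θ) * Real.cos ((k:ℕ)*θ)))
      (fun θ _ => hpt θ)]
  have hii : ∀ (j k : Fin (n+1)), IntervalIntegrable
      (fun θ => (c j * (starRingEnd ℂ) (c k)).re * (Real.cos ((j:ℕ)*θ) * Real.cos ((k:ℕ)*θ)))
      volume 0 Real.pi := by
    intro j k
    have hc : ∀ m : ℕ, Continuous fun θ : ℝ => Real.cos (m*θ) :=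
      fun m => Real.continuous_cos.comp (continuous_const.mul continuous_id)
    exact (continuous_const.mul ((hc j).mul (hc k))).intervalIntegrable _ _
  have hii2 : ∀ j : Fin (n+1), IntervalIntegrable (fun θ => ∑ k : Fin (n+1),
      (c j * (starRingEnd ℂ) (c k)).re * (Real.cos ((j:ℕ)*θ) * Real.cos ((k:ℕ)*θ))) volume 0 Real.pi := by
    intro j
    have h := IntervalIntegrable.sum (μ := volume) (a := (0:ℝ)) (b := Real.pi)
      (Finset.univ : Finset (Fin (n+1))) (fun k _ => hii j k)
    have he : (fun θ => ∑ k : Fin (n+1),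
        (c j * (starRingEnd ℂ) (c k)).re * (Real.cos ((j:ℕ)*θ) * Real.cos ((k:ℕ)*θ)))
        = ∑ k : Fin (n+1), (fun θ => (c j * (starRingEnd ℂ) (c k)).re * (Real.cos ((j:ℕ)*θ) * Real.cos ((k:ℕ)*θ))) := by
      funext θ; simp
    rw [he]; exact h
  have hsum1 := intervalIntegral.integral_finset_sum (μ := volume) (a := (0:ℝ)) (b := Real.pi)
      (s := (Finset.univ : Finset (Fin (n+1)))) (f := fun (j : Fin (n+1)) (θ : ℝ) =>
      ∑ k : Fin (n+1), (c j * (starRingEnd ℂ) (c k)).re * (Real.cos ((j:ℕ)*θ) * Real.cos ((k:ℕ)*θ)))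
      (fun j _ => hii2 j)
  rw [hsum1]
  refine Finset.sum_congr rfl fun j _ => ?_
  have hsum2 := intervalIntegral.integral_finset_sum (μ := volume) (a := (0:ℝ)) (b := Real.pi)
      (s := (Finset.univ : Finset (Fin (n+1)))) (f := fun (k : Fin (n+1)) (θ : ℝ) =>
      (c j * (starRingEnd ℂ) (c k)).re * (Real.cos ((j:ℕ)*θ) * Real.cos ((k:ℕ)*θ)))
      (fun k _ => hii j k)
  rw [hsum2]
  have : ∀ k : Fin (n+1), (∫ θ in (0:ℝ)..Real.pi,
      (c j * (starRingEnd ℂ) (c k)).re * (Real.cos ((j:ℕ)*θ) * Real.cos ((k:ℕ)*θ)))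
      = (c j * (starRingEnd ℂ) (c k)).re *
          (if (j:ℕ) = (k:ℕ) then (if (j:ℕ) = 0 then Real.pi else Real.pi/2) else 0) := by
    intro k
    rw [intervalIntegral.integral_const_mul, orth]
  simp only [this]
  rw [Finset.sum_eq_single j]
  · simp only [if_pos rfl]
    congr 1
    rw [Complex.mul_conj]
    simp [Complex.sq_norm]
  · intro k _ hk
    rw [if_neg (fun h => hk (Fin.ext h).symm)]
    simp
  · intro h; exact absurd (Finset.mem_univ j) h


lemma cos_image : Real.cos '' Ioo 0 Real.pi = Ioo (-1:ℝ) 1 := by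
  ext u
  constructor
  · rintro ⟨θ, ⟨h0, hπ⟩, rfl⟩
    have hm : θ ∈ Icc 0 Real.pi := ⟨h0.le, hπ.le⟩
    constructor
    · have := Real.strictAntiOn_cos hm ⟨Real.pi_pos.le, le_refl _⟩ hπ
      rwa [Real.cos_pi] at this
    · have := Real.strictAntiOn_cos ⟨le_refl _, Real.pi_pos.le⟩ hm h0
      rwa [Real.cos_zero] at this
  · rintro ⟨h1, h2⟩
    refine ⟨Real.arccos u, ⟨Real.arccos_pos.mpr h2, ?_⟩, Real.cos_arccos h1.le h2.le⟩
    rcases lt_or_eq_of_le (Real.arccos_le_pi u) with h | h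
    · exact h
    · exfalso
      have : Real.cos (Real.arccos u) = -1 := by rw [h, Real.cos_pi]
      rw [Real.cos_arccos h1.le h2.le] at this
      exact absurd this (ne_of_gt h1)

lemma cov (P : Polynomial ℂ) :
    ∫ u in Set.Icc (-1:ℝ) 1, ‖P.eval ((u:ℝ):ℂ)‖ ^ 2 * (1 - u^2) ^ (-(1:ℝ)/2)
      = ∫ θ in (0:ℝ)..Real.pi, ‖P.eval ((Real.cos θ : ℝ):ℂ)‖ ^ 2 := by
  rw [MeasureTheory.integral_Icc_eq_integral_Ioo, ← cos_image]
  rw [integral_image_eq_integral_abs_deriv_smul measurableSet_Ioo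
      (fun x _ => (Real.hasDerivAt_cos x).hasDerivWithinAt)
      (Real.injOn_cos.mono (Set.Ioo_subset_Icc_self))]
  rw [intervalIntegral.integral_of_le Real.pi_pos.le, MeasureTheory.integral_Ioc_eq_integral_Ioo]
  refine setIntegral_congr_fun measurableSet_Ioo (fun θ hθ => ?_)
  obtain ⟨h0, hπ⟩ := hθ
  have hs : 0 < Real.sin θ := Real.sin_pos_of_pos_of_lt_pi h0 hπ
  have hw : (1 - Real.cos θ ^ 2) ^ (-(1:ℝ)/2) = (Real.sin θ)⁻¹ := by
    rw [← Real.sin_sq]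
    rw [← Real.rpow_natCast (Real.sin θ) 2, ← Real.rpow_mul hs.le]
    norm_num
    exact Real.rpow_neg_one _
  rw [hw]
  simp only [smul_eq_mul, abs_neg, abs_of_pos hs]
  field_simp

lemma natDegree_T_pair (k : ℕ) :
    (Polynomial.Chebyshev.T ℂ k).natDegree ≤ k ∧
      (Polynomial.Chebyshev.T ℂ (k+1 : ℕ)).natDegree ≤ k+1 := by
  induction k with
  | zero =>
    constructor
    · simp [Polynomial.Chebyshev.T_zero]
    · simp [Polynomial.Chebyshev.T_one]
  | succ k ih =>
    refine ⟨ih.2, ?_⟩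
    have hcast : ((k+1+1 : ℕ) : ℤ) = (k:ℤ)+2 := by push_cast; ring
    rw [hcast, Polynomial.Chebyshev.T_add_two ℂ (k : ℤ)]
    refine le_trans (Polynomial.natDegree_sub_le _ _) (max_le ?_ ?_)
    · refine le_trans (Polynomial.natDegree_mul_le) ?_
      have hx : (2 * Polynomial.X : Polynomial ℂ).natDegree ≤ 1 := by
        refine le_trans (Polynomial.natDegree_mul_le) ?_
        simp
      have hcast2 : ((k:ℤ)+1) = ((k+1 : ℕ) : ℤ) := by push_cast; ring
      rw [hcast2]
      have := ih.2
      omega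
    · exact le_trans ih.1 (by omega)

lemma natDegree_T_le (k : ℕ) : (Polynomial.Chebyshev.T ℂ k).natDegree ≤ k :=
  (natDegree_T_pair k).1

lemma I_eq (n : ℕ) (P : Polynomial ℂ) (c : Fin (n+1) → ℂ)
    (hc : ∀ θ : ℝ, P.eval ((Real.cos θ : ℝ):ℂ) = ∑ k : Fin (n+1), c k * Real.cos ((k:ℕ)*θ)) :
    ∫ u in Set.Icc (-1:ℝ) 1, ‖P.eval (u:ℂ)‖ ^ 2 * (1 - u^2) ^ (-(1:ℝ)/2)
      = ∑ k : Fin (n+1), ‖c k‖^2 * (if (k:ℕ) = 0 then Real.pi else Real.pi/2) := by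
  rw [cov]
  rw [intervalIntegral.integral_congr (g := fun θ =>
      ‖∑ k : Fin (n+1), c k * Real.cos ((k:ℕ)*θ)‖^2) (fun θ _ => by rw [hc θ])]
  exact J_eq n c

lemma sup_le_aux (n : ℕ) (P : Polynomial ℂ) (c : Fin (n+1) → ℂ)
    (hc : ∀ θ : ℝ, P.eval ((Real.cos θ : ℝ):ℂ) = ∑ k : Fin (n+1), c k * Real.cos ((k:ℕ)*θ))
    (u : Set.Icc (-1:ℝ) 1) :
    ‖P.eval ((u:ℝ):ℂ)‖ ≤ ∑ k : Fin (n+1), ‖c k‖ := by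
  obtain ⟨u, hu⟩ := u
  rw [Set.mem_Icc] at hu
  have h1 : (u:ℝ) = Real.cos (Real.arccos u) := (Real.cos_arccos hu.1 hu.2).symm
  show ‖P.eval ((u:ℝ):ℂ)‖ ≤ _
  rw [h1, hc]
  refine le_trans (norm_sum_le _ _) (Finset.sum_le_sum fun k _ => ?_)
  rw [norm_mul, Complex.norm_real, Real.norm_eq_abs]
  exact mul_le_of_le_one_right (norm_nonneg _) (abs_cos_le_one _)

lemma inv_h_sum (n : ℕ) :
    ∑ k : Fin (n+1), ((if (k:ℕ) = 0 then Real.pi else Real.pi/2))⁻¹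
      = (2*(n:ℝ)+1)/Real.pi := by
  rw [Fin.sum_univ_succ]
  have hπ := Real.pi_pos
  simp only [Fin.val_zero, if_pos rfl, Fin.val_succ, Nat.succ_ne_zero, if_neg (Nat.succ_ne_zero _), ↓reduceIte]
  rw [Finset.sum_const, Finset.card_univ, Fintype.card_fin]
  field_simp
  have hπ2 : Real.pi * (2 / Real.pi) = 2 := by field_simp
  rw [nsmul_eq_mul, mul_left_comm, hπ2]; ring

lemma CS (n : ℕ) (c : Fin (n+1) → ℂ) :
    (∑ k : Fin (n+1), ‖c k‖)^2
      ≤ ((2*(n:ℝ)+1)/Real.pi) *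
        ∑ k : Fin (n+1), ‖c k‖^2 * (if (k:ℕ) = 0 then Real.pi else Real.pi/2) := by
  have hpos : ∀ k : Fin (n+1), (0:ℝ) < (if (k:ℕ) = 0 then Real.pi else Real.pi/2) := by
    intro k; split <;> [exact Real.pi_pos; exact half_pos Real.pi_pos]
  have h := Finset.sum_mul_sq_le_sq_mul_sq Finset.univ
      (fun k : Fin (n+1) => Real.sqrt ((if (k:ℕ) = 0 then Real.pi else Real.pi/2))⁻¹)
      (fun k : Fin (n+1) => Real.sqrt (if (k:ℕ) = 0 then Real.pi else Real.pi/2) * ‖c k‖)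
  have e1 : ∀ k : Fin (n+1),
      Real.sqrt ((if (k:ℕ) = 0 then Real.pi else Real.pi/2))⁻¹ *
        (Real.sqrt (if (k:ℕ) = 0 then Real.pi else Real.pi/2) * ‖c k‖)
      = ‖c k‖ := by
    intro k
    rw [Real.sqrt_inv, ← mul_assoc, inv_mul_cancel₀ (Real.sqrt_ne_zero'.mpr (hpos k)), one_mul]
  have e2 : ∀ k : Fin (n+1),
      (Real.sqrt ((if (k:ℕ) = 0 then Real.pi else Real.pi/2))⁻¹)^2
      = ((if (k:ℕ) = 0 then Real.pi else Real.pi/2))⁻¹ := by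
    intro k; exact Real.sq_sqrt (inv_nonneg.mpr (hpos k).le)
  have e3 : ∀ k : Fin (n+1),
      (Real.sqrt (if (k:ℕ) = 0 then Real.pi else Real.pi/2) * ‖c k‖)^2
      = ‖c k‖^2 * (if (k:ℕ) = 0 then Real.pi else Real.pi/2) := by
    intro k
    rw [mul_pow, Real.sq_sqrt (hpos k).le]
    ring
  simp only [e1, e2, e3] at h
  rwa [inv_h_sum n] at h

lemma upper_bound (n : ℕ) (P : Polynomial ℂ) (hP : P.natDegree ≤ n) :
    (⨆ u : Set.Icc (-1:ℝ) 1, ‖P.eval ((u:ℝ):ℂ)‖) /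
      (∫ u in Set.Icc (-1:ℝ) 1, ‖P.eval (u:ℂ)‖ ^ 2 * (1 - u^2) ^ (-(1:ℝ)/2)) ^ ((1:ℝ)/2)
    ≤ ((2*(n:ℝ) + 1) / Real.pi) ^ ((1:ℝ)/2) := by
  haveI : Nonempty (Set.Icc (-1:ℝ) 1) := ⟨⟨0, by norm_num⟩⟩
  have hπ := Real.pi_pos
  obtain ⟨c, hc⟩ := exists_expansion n P hP
  set I : ℝ := ∫ u in Set.Icc (-1:ℝ) 1,
      ‖P.eval (u:ℂ)‖ ^ 2 * (1 - u^2) ^ (-(1:ℝ)/2) with hIdef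
  set B : ℝ := ∑ k : Fin (n+1), ‖c k‖ with hBdef
  have hB0 : 0 ≤ B := Finset.sum_nonneg fun k _ => norm_nonneg _
  have hIeq : I = ∑ k : Fin (n+1), ‖c k‖^2 *
      (if (k:ℕ) = 0 then Real.pi else Real.pi/2) := I_eq n P c hc
  have hI0 : 0 ≤ I := by
    rw [hIeq]
    refine Finset.sum_nonneg fun k _ => mul_nonneg (sq_nonneg _) ?_
    split <;> positivity
  have hS_le : (⨆ u : Set.Icc (-1:ℝ) 1, ‖P.eval ((u:ℝ):ℂ)‖) ≤ B :=
    ciSup_le (sup_le_aux n P c hc)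
  have hS0 : 0 ≤ (⨆ u : Set.Icc (-1:ℝ) 1, ‖P.eval ((u:ℝ):ℂ)‖) := by
    have hbdd : BddAbove (Set.range fun u : Set.Icc (-1:ℝ) 1 =>
        ‖P.eval ((u:ℝ):ℂ)‖) := by
      refine ⟨B, ?_⟩
      rintro x ⟨u, rfl⟩
      exact sup_le_aux n P c hc u
    exact le_trans (norm_nonneg _) (le_ciSup hbdd (⟨0, by norm_num⟩ : Set.Icc (-1:ℝ) 1))
  have hCS : B^2 ≤ ((2*(n:ℝ)+1)/Real.pi) * I := by rw [hIeq]; exact CS n c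
  have hRnn : (0:ℝ) ≤ (2*(n:ℝ)+1)/Real.pi := by positivity
  rw [← Real.sqrt_eq_rpow, ← Real.sqrt_eq_rpow]
  rcases eq_or_lt_of_le hI0 with hI | hI
  · rw [← hI, Real.sqrt_zero, div_zero]
    exact Real.sqrt_nonneg _
  · rw [div_le_iff₀ (Real.sqrt_pos.mpr hI)]
    calc (⨆ u : Set.Icc (-1:ℝ) 1, ‖P.eval ((u:ℝ):ℂ)‖) ≤ B := hS_le
      _ = Real.sqrt (B^2) := (Real.sqrt_sq hB0).symm
      _ ≤ Real.sqrt (((2*(n:ℝ)+1)/Real.pi) * I) := Real.sqrt_le_sqrt hCS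
      _ = Real.sqrt ((2*(n:ℝ)+1)/Real.pi) * Real.sqrt I := Real.sqrt_mul hRnn I

lemma lower_bound (n : ℕ) : ∃ P : Polynomial ℂ, P ≠ 0 ∧ P.natDegree ≤ n ∧
    ((2*(n:ℝ) + 1) / Real.pi) ^ ((1:ℝ)/2)
      ≤ (⨆ u : Set.Icc (-1:ℝ) 1, ‖P.eval ((u:ℝ):ℂ)‖) /
        (∫ u in Set.Icc (-1:ℝ) 1,
            ‖P.eval (u:ℂ)‖ ^ 2 * (1 - u^2) ^ (-(1:ℝ)/2)) ^ ((1:ℝ)/2) := by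
  haveI : Nonempty (Set.Icc (-1:ℝ) 1) := ⟨⟨0, by norm_num⟩⟩
  have hπ := Real.pi_pos
  set P : Polynomial ℂ := ∑ k ∈ Finset.range (n+1),
      Polynomial.C (if k = 0 then (1:ℂ) else 2) * Polynomial.Chebyshev.T ℂ k with hPdef
  set c : Fin (n+1) → ℂ := fun k => if (k:ℕ) = 0 then 1 else 2 with hcdef
  have hc : ∀ θ : ℝ, P.eval ((Real.cos θ : ℝ):ℂ) = ∑ k : Fin (n+1), c k * Real.cos ((k:ℕ)*θ) := by
    intro θ
    rw [hPdef, Polynomial.eval_finset_sum, ← Fin.sum_univ_eq_sum_range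
      (fun k => Polynomial.eval ((Real.cos θ : ℝ):ℂ)
        (Polynomial.C (if k = 0 then (1:ℂ) else 2) * Polynomial.Chebyshev.T ℂ k))]
    refine Finset.sum_congr rfl fun k _ => ?_
    rw [Polynomial.eval_mul, Polynomial.eval_C]
    congr 1
    have h1 : ((Real.cos θ : ℝ):ℂ) = Complex.cos (θ:ℂ) := by
      rw [Complex.ofReal_cos]
    rw [h1, Polynomial.Chebyshev.T_complex_cos]
    rw [show (((k:ℕ):ℤ):ℂ) = ((k:ℕ):ℂ) by push_cast; ring]
    rw [show (((k:ℕ):ℂ) * (θ:ℂ)) = ((((k:ℕ):ℝ) * θ : ℝ) : ℂ) by push_cast; ring]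
    rw [← Complex.ofReal_cos]
  have hdeg : P.natDegree ≤ n := by
    rw [hPdef]
    refine Polynomial.natDegree_sum_le_of_forall_le _ _ fun k hk => ?_
    refine le_trans (Polynomial.natDegree_mul_le) ?_
    rw [Polynomial.natDegree_C]
    have := natDegree_T_le k
    have := Finset.mem_range.mp hk
    omega
  -- value at 1
  have hval : P.eval ((1:ℝ):ℂ) = ((2*(n:ℝ)+1 : ℝ):ℂ) := by
    have h0 := hc 0
    rw [Real.cos_zero] at h0
    rw [h0]
    rw [Fin.sum_univ_succ]
    simp only [hcdef, Fin.val_zero, if_pos rfl, Fin.val_succ, if_neg (Nat.succ_ne_zero _)]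
    simp only [mul_zero, Real.cos_zero, Complex.ofReal_one, mul_one]
    rw [Finset.sum_const, Finset.card_univ, Fintype.card_fin]
    push_cast
    ring
  have hne : P ≠ 0 := by
    intro h
    rw [h] at hval
    simp only [Polynomial.eval_zero] at hval
    have : (2*(n:ℝ)+1 : ℝ) = 0 := by exact_mod_cast hval.symm
    nlinarith [Nat.cast_nonneg (α := ℝ) n]
  refine ⟨P, hne, hdeg, ?_⟩
  have hIeq : (∫ u in Set.Icc (-1:ℝ) 1,
      ‖P.eval (u:ℂ)‖ ^ 2 * (1 - u^2) ^ (-(1:ℝ)/2)) = (2*(n:ℝ)+1) * Real.pi := by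
    rw [I_eq n P c hc, Fin.sum_univ_succ]
    simp only [hcdef, Fin.val_zero, if_pos rfl, Fin.val_succ, if_neg (Nat.succ_ne_zero _)]
    simp only [map_one, one_pow, one_mul, Complex.norm_ofNat]
    rw [Finset.sum_const, Finset.card_univ, Fintype.card_fin]
    push_cast
    rw [norm_one]
    ring
  have hB : ∀ u : Set.Icc (-1:ℝ) 1, ‖P.eval ((u:ℝ):ℂ)‖
      ≤ ∑ k : Fin (n+1), ‖c k‖ := sup_le_aux n P c hc
  have hS_ge : (2*(n:ℝ)+1) ≤ ⨆ u : Set.Icc (-1:ℝ) 1, ‖P.eval ((u:ℝ):ℂ)‖ := by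
    have hbdd : BddAbove (Set.range fun u : Set.Icc (-1:ℝ) 1 =>
        ‖P.eval ((u:ℝ):ℂ)‖) := by
      refine ⟨∑ k : Fin (n+1), ‖c k‖, ?_⟩
      rintro x ⟨u, rfl⟩
      exact hB u
    have h1 : ‖P.eval (((⟨1, by norm_num⟩ : Set.Icc (-1:ℝ) 1):ℝ):ℂ)‖
        = 2*(n:ℝ)+1 := by
      show ‖P.eval ((1:ℝ):ℂ)‖ = 2*(n:ℝ)+1
      rw [hval, Complex.norm_real, Real.norm_eq_abs]
      have : (0:ℝ) ≤ 2*(n:ℝ)+1 := by positivity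
      rw [abs_of_nonneg this]
    calc (2*(n:ℝ)+1) = _ := h1.symm
      _ ≤ _ := le_ciSup hbdd (⟨1, by norm_num⟩ : Set.Icc (-1:ℝ) 1)
  rw [hIeq, ← Real.sqrt_eq_rpow, ← Real.sqrt_eq_rpow]
  have hq : Real.sqrt ((2*(n:ℝ)+1)/Real.pi) = (2*(n:ℝ)+1) / Real.sqrt ((2*(n:ℝ)+1) * Real.pi) := by
    have h1 : (2*(n:ℝ)+1)/Real.pi = (2*(n:ℝ)+1)^2 / ((2*(n:ℝ)+1) * Real.pi) := by
      have hp : (0:ℝ) < 2*(n:ℝ)+1 := by positivity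
      field_simp
    rw [h1, Real.sqrt_div (sq_nonneg _), Real.sqrt_sq (by positivity : (0:ℝ) ≤ 2*(n:ℝ)+1)]
  rw [hq]
  have hden : (0:ℝ) < Real.sqrt ((2*(n:ℝ)+1) * Real.pi) := Real.sqrt_pos.mpr (by positivity)
  exact div_le_div_of_nonneg_right hS_ge hden.le |>.trans_eq rfl

theorem stmt12 (n : ℕ) :
    (⨆ P : {P : Polynomial ℂ // P ≠ 0 ∧ P.natDegree ≤ n},
        (⨆ u : Set.Icc (-1:ℝ) 1, ‖P.1.eval ((u:ℝ):ℂ)‖) /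
          (∫ u in Set.Icc (-1:ℝ) 1,
              ‖P.1.eval (u:ℂ)‖ ^ 2 * (1 - u^2) ^ (-(1:ℝ)/2)) ^ ((1:ℝ)/2)) =
      ((2*n + 1) / Real.pi) ^ ((1:ℝ)/2) := by
  haveI : Nonempty {P : Polynomial ℂ // P ≠ 0 ∧ P.natDegree ≤ n} :=
    ⟨⟨1, one_ne_zero, by simp⟩⟩
  obtain ⟨P₀, h0, hd, hlb⟩ := lower_bound n
  apply le_antisymm
  · exact ciSup_le fun P => upper_bound n P.1 P.2.2
  · refine le_ciSup_of_le ⟨((2*(n:ℝ)+1)/Real.pi) ^ ((1:ℝ)/2), ?_⟩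
      (⟨P₀, h0, hd⟩ : {P : Polynomial ℂ // P ≠ 0 ∧ P.natDegree ≤ n}) hlb
    rintro x ⟨P, rfl⟩
    exact upper_bound n P.1 P.2.2
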